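/- Let n ≥ 2 and v, d ∈ ℤ_{≥0}^{n−1}. Let V_1,…,V_{n−1} and D_1,…,D_{n−1} be complex vector spaces with dim V_i = v_i and dim D_i = d_i, and set V_0 = V_n = 0. Let B_i : V_i → V_{i+1} and B̄_i : V_{i+1} → V_i (for 1 ≤ i ≤ n−2, with B_0, B̄_0, B_{n−1}, B̄_{n−1} understood as zero maps), p_i : D_i → V_i and q_i : V_i → D_i be linear maps satisfying the moment map equations B_{i−1}∘B̄_{i−1} − B̄_i∘B_i + p_i∘q_i = 0 in End(V_i) for every 1 ≤ i ≤ n−1. Let D = ⊕_{1 ≤ h ≤ j ≤ n−1} D_j^h, where each D_j^h is a copy of D_j. Let x ∈ End(D) be the operator mapping D_j^h identically onto D_j^{h−1} for h ≥ 2 and killing each D_j^1. Let f ∈ End(D) be the operator whose block f^{j',h'}_{j,h} : D_{j'}^{h'} → D_j^h equals q_j∘B_{j−1}∘B_{j−2}∘⋯∘B_{h'}∘B̄_{h'}∘B̄_{h'+1}∘⋯∘B̄_{j'−1}∘p_{j'} : D_{j'} → D_j whenever h = j and h' ≤ j (where the chain B_{j−1}⋯B_{h'} is absent if h' = j and the chain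 B̄_{h'}⋯B̄_{j'−1} is absent if h' = j'), and equals 0 in all other cases. Then the operator x + f ∈ End(D) is nilpotent. -/

import Mathlib

open Module

/-- The composite `B_{a+k-1} ∘ ⋯ ∘ B_{a+1} ∘ B_a : V_a → V_{a+k}` of the forward
quiver maps (the identity when `k = 0`). -/
noncomputable def upChain {V : ℕ → Type} [∀ i, AddCommGroup (V i)]
    [∀ i, Module ℂ (V i)] (B : ∀ i, V i →ₗ[ℂ] V (i + 1)) (a : ℕ) :
    (k : ℕ) → (V a →ₗ[ℂ] V (a + k))
  | 0 => LinearMap.id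
  | k + 1 => B (a + k) ∘ₗ upChain B a k

/-- The composite `B̄_a ∘ B̄_{a+1} ∘ ⋯ ∘ B̄_{a+k-1} : V_{a+k} → V_a` of the backward
quiver maps (the identity when `k = 0`). -/
noncomputable def downChain {V : ℕ → Type} [∀ i, AddCommGroup (V i)]
    [∀ i, Module ℂ (V i)] (Bb : ∀ i, V (i + 1) →ₗ[ℂ] V i) (a : ℕ) :
    (k : ℕ) → (V (a + k) →ₗ[ℂ] V a)
  | 0 => LinearMap.id
  | k + 1 => downChain Bb a k ∘ₗ Bb (a + k)

/-- Transport of a linear map along an equality of indices. -/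
noncomputable def castL {V : ℕ → Type} [∀ i, AddCommGroup (V i)]
    [∀ i, Module ℂ (V i)] {a b : ℕ} (h : a = b) : V a →ₗ[ℂ] V b := by
  subst h; exact LinearMap.id

/-- The block `q_j ∘ B_{j-1} ∘ ⋯ ∘ B_{h'} ∘ B̄_{h'} ∘ ⋯ ∘ B̄_{j'-1} ∘ p_{j'} :
D_{j'} → D_j` of the Mirković–Vybornov map (zero when `h' > j` or `h' > j'`;
the chain `B_{j-1}⋯B_{h'}` is absent when `h' = j`, and the chain
`B̄_{h'}⋯B̄_{j'-1}` is absent when `h' = j'`). -/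
noncomputable def phiBlock {V Dsp : ℕ → Type}
    [∀ i, AddCommGroup (V i)] [∀ i, Module ℂ (V i)]
    [∀ i, AddCommGroup (Dsp i)] [∀ i, Module ℂ (Dsp i)]
    (B : ∀ i, V i →ₗ[ℂ] V (i + 1)) (Bb : ∀ i, V (i + 1) →ₗ[ℂ] V i)
    (p : ∀ i, Dsp i →ₗ[ℂ] V i) (q : ∀ i, V i →ₗ[ℂ] Dsp i)
    (h' j' j : ℕ) : Dsp j' →ₗ[ℂ] Dsp j :=
  if h1 : h' ≤ j then
    if h2 : h' ≤ j' then
      q j ∘ₗ castL (V := V) (Nat.add_sub_cancel' h1) ∘ₗ upChain B h' (j - h') ∘ₗ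
        downChain Bb h' (j' - h') ∘ₗ castL (V := V) (Nat.add_sub_cancel' h2).symm ∘ₗ p j'
    else 0
  else 0

section Aux

variable {V : ℕ → Type} [∀ i, AddCommGroup (V i)] [∀ i, Module ℂ (V i)]
variable (B : ∀ i, V i →ₗ[ℂ] V (i + 1)) (Bb : ∀ i, V (i + 1) →ₗ[ℂ] V i)

lemma castL_comp_castL {a b c : ℕ} (h1 : a = b) (h2 : b = c) :
    castL (V := V) h2 ∘ₗ castL (V := V) h1 = castL (V := V) (h1.trans h2) := by
  subst h1; subst h2; rfl

lemma castL_comp_B {a b : ℕ} (h : a = b) (h' : a + 1 = b + 1) :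
    castL (V := V) h' ∘ₗ B a = B b ∘ₗ castL (V := V) h := by
  subst h; rfl

lemma castL_comp_Bb {a b : ℕ} (h : a = b) (h' : a + 1 = b + 1) :
    castL (V := V) h ∘ₗ Bb a = Bb b ∘ₗ castL (V := V) h' := by
  subst h; rfl

lemma upChain_succ (a k : ℕ) : upChain B a (k + 1) = B (a + k) ∘ₗ upChain B a k := rfl

lemma downChain_succ (a k : ℕ) :
    downChain Bb a (k + 1) = downChain Bb a k ∘ₗ Bb (a + k) := rfl

lemma downChain_peel (a k : ℕ) :
    downChain Bb a (k + 1)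
      = Bb a ∘ₗ downChain Bb (a + 1) k ∘ₗ castL (V := V) (by omega : a + (k + 1) = (a + 1) + k) := by
  induction k with
  | zero => rfl
  | succ k ih =>
    rw [downChain_succ Bb a (k+1), ih, downChain_succ]
    rw [LinearMap.comp_assoc, LinearMap.comp_assoc,
      castL_comp_Bb Bb (by omega : a + (k+1) = (a+1) + k) (by omega : a + (k+1) + 1 = (a+1) + k + 1)]
    rfl

noncomputable def upTo (a b : ℕ) : V a →ₗ[ℂ] V b :=
  if h : a ≤ b then castL (V := V) (Nat.add_sub_cancel' h) ∘ₗ upChain B a (b - a) else 0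

noncomputable def downTo (a b : ℕ) : V b →ₗ[ℂ] V a :=
  if h : a ≤ b then downChain Bb a (b - a) ∘ₗ castL (V := V) (Nat.add_sub_cancel' h).symm else 0

lemma upTo_eq {a b : ℕ} (k : ℕ) (hk : a + k = b) :
    upTo B a b = castL (V := V) hk ∘ₗ upChain B a k := by
  have hab : a ≤ b := by omega
  have hk' : k = b - a := by omega
  subst hk'
  simp only [upTo, dif_pos hab]

lemma downTo_eq {a b : ℕ} (k : ℕ) (hk : a + k = b) :
    downTo Bb a b = downChain Bb a k ∘ₗ castL (V := V) hk.symm := by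
  have hab : a ≤ b := by omega
  have hk' : k = b - a := by omega
  subst hk'
  simp only [downTo, dif_pos hab]

lemma upTo_self (a : ℕ) : upTo B a a = LinearMap.id := by
  rw [upTo_eq B 0 (by omega : a + 0 = a)]; rfl

lemma downTo_self (a : ℕ) : downTo Bb a a = LinearMap.id := by
  rw [downTo_eq Bb 0 (by omega : a + 0 = a)]; rfl

lemma upTo_succ {a b : ℕ} (h : a ≤ b) : upTo B a (b + 1) = B b ∘ₗ upTo B a b := by
  have e : a + (b - a) = b := by omega
  have e' : a + (b - a) + 1 = b + 1 := by omega
  rw [upTo_eq B (b - a + 1) e', upTo_eq B (b - a) e, upChain_succ,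
    ← LinearMap.comp_assoc, castL_comp_B B e e', LinearMap.comp_assoc]

lemma downTo_peel {a b : ℕ} (h : a < b) : downTo Bb a b = Bb a ∘ₗ downTo Bb (a + 1) b := by
  have e : a + (b - a - 1 + 1) = b := by omega
  have e2 : (a + 1) + (b - a - 1) = b := by omega
  rw [downTo_eq Bb (b - a - 1 + 1) e, downTo_eq Bb (b - a - 1) e2, downChain_peel,
    LinearMap.comp_assoc, LinearMap.comp_assoc, castL_comp_castL]

end Aux

section Aux2
variable {V Dsp : ℕ → Type}
    [∀ i, AddCommGroup (V i)] [∀ i, Module ℂ (V i)]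
    [∀ i, AddCommGroup (Dsp i)] [∀ i, Module ℂ (Dsp i)]
    (B : ∀ i, V i →ₗ[ℂ] V (i + 1)) (Bb : ∀ i, V (i + 1) →ₗ[ℂ] V i)
    (p : ∀ i, Dsp i →ₗ[ℂ] V i) (q : ∀ i, V i →ₗ[ℂ] Dsp i)

lemma phiBlock_eq {h' j' j : ℕ} (h1 : h' ≤ j) (h2 : h' ≤ j') :
    phiBlock B Bb p q h' j' j = q j ∘ₗ upTo B h' j ∘ₗ downTo Bb h' j' ∘ₗ p j' := by
  simp only [phiBlock, dif_pos h1, dif_pos h2, upTo, downTo]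
  rfl

lemma phiBlock_zero_left {h' j' j : ℕ} (h1 : ¬ h' ≤ j) :
    phiBlock B Bb p q h' j' j = 0 := by
  simp only [phiBlock, dif_neg h1]

lemma phiBlock_zero_right {h' j' j : ℕ} (h2 : ¬ h' ≤ j') :
    phiBlock B Bb p q h' j' j = 0 := by
  unfold phiBlock
  rcases le_or_gt h' j with h1 | h1
  · rw [dif_pos h1, dif_neg h2]
  · rw [dif_neg (by omega)]

end Aux2

lemma sum_sum_ite_eq' {M : Type*} [AddCommMonoid M] (s : Finset ℕ) (t : ℕ → Finset ℕ)
    (j h : ℕ) (c : M) :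
    (∑ j' ∈ s, ∑ h' ∈ t j', if j' = j ∧ h' = h then c else 0)
      = if j ∈ s ∧ h ∈ t j then c else 0 := by
  by_cases hj : j ∈ s
  · rw [Finset.sum_eq_single_of_mem j hj]
    · simp only [true_and, Finset.sum_ite_eq', hj]
    · intro b _ hne
      apply Finset.sum_eq_zero
      intro h' _
      rw [if_neg]
      exact fun hc => hne hc.1
  · rw [if_neg (fun hc => hj hc.1)]
    apply Finset.sum_eq_zero
    intro j' hj'
    apply Finset.sum_eq_zero
    intro h' _
    rw [if_neg]
    rintro ⟨rfl, -⟩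
    exact hj hj'

/-- Let `n ≥ 2`, `v, d ∈ ℤ_{≥0}^{n-1}`, and let
`(B, B̄, p, q)` be a point of `Λ(v,d)`: linear maps `B_i : V_i → V_{i+1}`,
`B̄_i : V_{i+1} → V_i`, `p_i : D_i → V_i`, `q_i : V_i → D_i` between complex
vector spaces with `dim V_i = v_i`, `dim D_i = d_i`, `V_0 = V_n = 0`, with
`B_0, B̄_0, B_{n-1}, B̄_{n-1} = 0`, satisfying the moment map equations
`B_{i-1}B̄_{i-1} - B̄_iB_i + p_iq_i = 0` for `1 ≤ i ≤ n-1`.  Let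
`D = ⊕_{1 ≤ h ≤ j ≤ n-1} D_j^h` (`D_j^h` a copy of `D_j`, realized by
injections `ι_j^h` and projections `π_j^h`), let `x ∈ End(D)` map `D_j^h`
identically onto `D_j^{h-1}` (killing each `D_j^1`), and let `f ∈ End(D)` have
blocks `f^{j',h'}_{j,h} = q_j B_{j-1}⋯B_{h'} B̄_{h'}⋯B̄_{j'-1} p_{j'}` for
`h = j ≥ h'`, and `0` otherwise.  Then `x + f` is nilpotent. -/
theorem stmt7 (n : ℕ) (hn : 2 ≤ n) (v d : ℕ → ℕ)
    (V Dsp : ℕ → Type)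
    [∀ i, AddCommGroup (V i)] [∀ i, Module ℂ (V i)] [∀ i, FiniteDimensional ℂ (V i)]
    [∀ i, AddCommGroup (Dsp i)] [∀ i, Module ℂ (Dsp i)] [∀ i, FiniteDimensional ℂ (Dsp i)]
    (hdimV : ∀ i, 1 ≤ i → i ≤ n - 1 → finrank ℂ (V i) = v i)
    (hV0 : finrank ℂ (V 0) = 0) (hVn : finrank ℂ (V n) = 0)
    (hdimD : ∀ i, 1 ≤ i → i ≤ n - 1 → finrank ℂ (Dsp i) = d i)
    (B : ∀ i, V i →ₗ[ℂ] V (i + 1)) (Bb : ∀ i, V (i + 1) →ₗ[ℂ] V i)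
    (p : ∀ i, Dsp i →ₗ[ℂ] V i) (q : ∀ i, V i →ₗ[ℂ] Dsp i)
    (hB : ∀ i, ¬(1 ≤ i ∧ i ≤ n - 2) → B i = 0)
    (hBb : ∀ i, ¬(1 ≤ i ∧ i ≤ n - 2) → Bb i = 0)
    (hmoment : ∀ i, i + 1 ≤ n - 1 →
      B i ∘ₗ Bb i - Bb (i + 1) ∘ₗ B (i + 1) + p (i + 1) ∘ₗ q (i + 1) = 0)
    (D : Type) [AddCommGroup D] [Module ℂ D]
    (ι : ∀ _j _h : ℕ, Dsp _j →ₗ[ℂ] D) (π : ∀ _j _h : ℕ, D →ₗ[ℂ] Dsp _j)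
    (hπι : ∀ j h, 1 ≤ h → h ≤ j → j ≤ n - 1 → π j h ∘ₗ ι j h = LinearMap.id)
    (hπι0 : ∀ j h j' h', 1 ≤ h → h ≤ j → j ≤ n - 1 → 1 ≤ h' → h' ≤ j' →
      j' ≤ n - 1 → (j, h) ≠ (j', h') → π j h ∘ₗ ι j' h' = 0)
    (hcomplete : ∑ j ∈ Finset.Icc 1 (n - 1), ∑ h ∈ Finset.Icc 1 j,
      ι j h ∘ₗ π j h = LinearMap.id)
    (x f : Module.End ℂ D)
    (hx : ∀ j h, 1 ≤ h → h ≤ j → j ≤ n - 1 →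
      x ∘ₗ ι j h = if 2 ≤ h then ι j (h - 1) else 0)
    (hf : ∀ j' h', 1 ≤ h' → h' ≤ j' → j' ≤ n - 1 →
      f ∘ₗ ι j' h' = ∑ j ∈ Finset.Icc h' (n - 1), ι j j ∘ₗ phiBlock B Bb p q h' j' j)
    (hfker : ∀ g : D, (∀ j h, 1 ≤ h → h ≤ j → j ≤ n - 1 → π j h g = 0) → f g = 0) :
    IsNilpotent (x + f) := by
  classical
  -- D is finite dimensional
  have hfinD : FiniteDimensional ℂ D := by
    set S : Submodule ℂ D :=
      (Finset.Icc 1 (n-1)).sup fun j => (Finset.Icc 1 j).sup fun h => LinearMap.range (ι j h)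
      with hSdef
    have hmem : ∀ z : D, z ∈ S := by
      intro z
      have hz : z = ∑ j ∈ Finset.Icc 1 (n-1), ∑ h ∈ Finset.Icc 1 j, ι j h (π j h z) := by
        conv_lhs => rw [← LinearMap.id_apply (R := ℂ) z, ← hcomplete]
        simp [LinearMap.sum_apply]
      rw [hz]
      refine Submodule.sum_mem _ fun j hj => Submodule.sum_mem _ fun h hh => ?_
      have hle1 : LinearMap.range (ι j h) ≤ (Finset.Icc 1 j).sup fun h => LinearMap.range (ι j h) :=
        Finset.le_sup (f := fun h => LinearMap.range (ι j h)) hh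
      have hle2 : ((Finset.Icc 1 j).sup fun h => LinearMap.range (ι j h)) ≤ S :=
        Finset.le_sup (f := fun j => (Finset.Icc 1 j).sup fun h => LinearMap.range (ι j h)) hj
      exact (le_trans hle1 hle2) (LinearMap.mem_range_self _ _)
    have htop : S = ⊤ := Submodule.eq_top_iff'.mpr hmem
    have hfin : FiniteDimensional ℂ (⊤ : Submodule ℂ D) := htop ▸ inferInstance
    exact Submodule.topEquiv.finiteDimensional
  -- key: no nonzero eigenvalue
  have key : ∀ μ : ℂ, μ ≠ 0 → ∀ w : D, (x + f) w = μ • w → w = 0 := by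
    intro μ hμ v hv
    have hVnsub : Subsingleton (V n) := Module.finrank_zero_iff.mp hVn
    have hsum : v = ∑ j ∈ Finset.Icc 1 (n-1), ∑ h ∈ Finset.Icc 1 j, ι j h (π j h v) := by
      conv_lhs => rw [← LinearMap.id_apply (R := ℂ) v, ← hcomplete]
      simp [LinearMap.sum_apply]
    have happ : x v + f v = μ • v := by
      rw [← hv, LinearMap.add_apply]
    -- term-wise projections of x v
    have hxterm : ∀ j h, 1 ≤ h → h ≤ j → j ≤ n-1 →
        ∀ j' ∈ Finset.Icc 1 (n-1), ∀ h' ∈ Finset.Icc 1 j',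
        π j h (x (ι j' h' (π j' h' v)))
          = if j' = j ∧ h' = h + 1 then π j (h+1) v else 0 := by
      intro j h h1 h2 h3 j' hj' h' hh'
      rw [Finset.mem_Icc] at hj' hh'
      rw [show x (ι j' h' (π j' h' v)) = (x ∘ₗ ι j' h') (π j' h' v) from rfl,
        hx j' h' hh'.1 hh'.2 hj'.2]
      by_cases h2' : 2 ≤ h'
      · rw [if_pos h2']
        by_cases he : j' = j ∧ h' = h + 1
        · obtain ⟨he1, he2⟩ := he
          subst he1; subst he2
          rw [if_pos ⟨rfl, rfl⟩]
          simp only [Nat.add_sub_cancel]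
          rw [← LinearMap.comp_apply, hπι j' h h1 h2 h3, LinearMap.id_apply]
        · rw [if_neg he]
          have hne : (j, h) ≠ (j', h' - 1) := by
            intro hcontra
            rw [Prod.mk.injEq] at hcontra
            exact he ⟨hcontra.1.symm, by omega⟩
          rw [← LinearMap.comp_apply,
            hπι0 j h j' (h'-1) h1 h2 h3 (by omega) (by omega) hj'.2 hne,
            LinearMap.zero_apply]
      · rw [if_neg h2', if_neg (by rintro ⟨rfl, rfl⟩; omega)]
        simp
    -- term-wise projections of f v
    have hfterm : ∀ j h, 1 ≤ h → h ≤ j → j ≤ n-1 →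
        ∀ j' ∈ Finset.Icc 1 (n-1), ∀ h' ∈ Finset.Icc 1 j',
        π j h (f (ι j' h' (π j' h' v)))
          = if h = j then phiBlock B Bb p q h' j' j (π j' h' v) else 0 := by
      intro j h h1 h2 h3 j' hj' h' hh'
      rw [Finset.mem_Icc] at hj' hh'
      rw [show f (ι j' h' (π j' h' v)) = (f ∘ₗ ι j' h') (π j' h' v) from rfl,
        hf j' h' hh'.1 hh'.2 hj'.2, LinearMap.sum_apply, map_sum]
      by_cases hhj : h = j
      · subst hhj
        rw [if_pos rfl]
        by_cases hcase : h' ≤ h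
        · rw [Finset.sum_eq_single_of_mem h (Finset.mem_Icc.mpr ⟨hcase, h3⟩)]
          · rw [show (ι h h ∘ₗ phiBlock B Bb p q h' j' h) (π j' h' v)
                = ι h h (phiBlock B Bb p q h' j' h (π j' h' v)) from rfl,
              ← LinearMap.comp_apply, hπι h h h1 le_rfl h3, LinearMap.id_apply]
          · intro j'' hj'' hne
            rw [Finset.mem_Icc] at hj''
            have hno : (h, h) ≠ (j'', j'') := by
              simp only [ne_eq, Prod.mk.injEq]
              rintro ⟨rfl, -⟩
              exact hne rfl
            rw [show (ι j'' j'' ∘ₗ phiBlock B Bb p q h' j' j'') (π j' h' v)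
                = ι j'' j'' (phiBlock B Bb p q h' j' j'' (π j' h' v)) from rfl,
              ← LinearMap.comp_apply,
              hπι0 h h j'' j'' h1 le_rfl h3 (by omega) le_rfl hj''.2 hno,
              LinearMap.zero_apply]
        · rw [phiBlock_zero_left B Bb p q hcase, LinearMap.zero_apply]
          apply Finset.sum_eq_zero
          intro j'' hj''
          rw [Finset.mem_Icc] at hj''
          have hno : (h, h) ≠ (j'', j'') := by
            simp only [ne_eq, Prod.mk.injEq]
            rintro ⟨rfl, -⟩
            omega
          rw [show (ι j'' j'' ∘ₗ phiBlock B Bb p q h' j' j'') (π j' h' v)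
              = ι j'' j'' (phiBlock B Bb p q h' j' j'' (π j' h' v)) from rfl,
            ← LinearMap.comp_apply,
            hπι0 h h j'' j'' h1 le_rfl h3 (by omega) le_rfl hj''.2 hno,
            LinearMap.zero_apply]
      · rw [if_neg hhj]
        apply Finset.sum_eq_zero
        intro j'' hj''
        rw [Finset.mem_Icc] at hj''
        have hno : (j, h) ≠ (j'', j'') := by
          simp only [ne_eq, Prod.mk.injEq]
          rintro ⟨rfl, he⟩
          exact hhj he
        rw [show (ι j'' j'' ∘ₗ phiBlock B Bb p q h' j' j'') (π j' h' v)
            = ι j'' j'' (phiBlock B Bb p q h' j' j'' (π j' h' v)) from rfl,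
          ← LinearMap.comp_apply,
          hπι0 j h j'' j'' h1 h2 h3 (by omega) le_rfl hj''.2 hno,
          LinearMap.zero_apply]
    -- projection of x v
    have hπxv : ∀ j h, 1 ≤ h → h ≤ j → j ≤ n-1 →
        π j h (x v) = if h + 1 ≤ j then π j (h+1) v else 0 := by
      intro j h h1 h2 h3
      have hx2 : π j h (x v) = ∑ j' ∈ Finset.Icc 1 (n-1), ∑ h' ∈ Finset.Icc 1 j',
          π j h (x (ι j' h' (π j' h' v))) := by
        conv_lhs => rw [hsum]
        simp only [map_sum]
      rw [hx2, Finset.sum_congr rfl fun j' hj' =>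
        Finset.sum_congr rfl fun h' hh' => hxterm j h h1 h2 h3 j' hj' h' hh',
        sum_sum_ite_eq']
      by_cases hc : h + 1 ≤ j
      · rw [if_pos ⟨Finset.mem_Icc.mpr ⟨by omega, h3⟩, Finset.mem_Icc.mpr ⟨by omega, hc⟩⟩,
          if_pos hc]
      · rw [if_neg (by simp only [Finset.mem_Icc]; omega), if_neg hc]
    -- projections of f v
    have hπfv_ne : ∀ j h, 1 ≤ h → h ≤ j → j ≤ n-1 → h ≠ j → π j h (f v) = 0 := by
      intro j h h1 h2 h3 hhj
      have hf2 : π j h (f v) = ∑ j' ∈ Finset.Icc 1 (n-1), ∑ h' ∈ Finset.Icc 1 j',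
          π j h (f (ι j' h' (π j' h' v))) := by
        conv_lhs => rw [hsum]
        simp only [map_sum]
      rw [hf2, Finset.sum_congr rfl fun j' hj' =>
        Finset.sum_congr rfl fun h' hh' => hfterm j h h1 h2 h3 j' hj' h' hh']
      simp only [if_neg hhj, Finset.sum_const_zero]
    have hπfv_eq : ∀ j, 1 ≤ j → j ≤ n-1 →
        π j j (f v) = ∑ j' ∈ Finset.Icc 1 (n-1), ∑ h' ∈ Finset.Icc 1 j',
          phiBlock B Bb p q h' j' j (π j' h' v) := by
      intro j h1 h3
      have hf2 : π j j (f v) = ∑ j' ∈ Finset.Icc 1 (n-1), ∑ h' ∈ Finset.Icc 1 j',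
          π j j (f (ι j' h' (π j' h' v))) := by
        conv_lhs => rw [hsum]
        simp only [map_sum]
      rw [hf2]
      apply Finset.sum_congr rfl
      intro j' hj'
      apply Finset.sum_congr rfl
      intro h' hh'
      rw [hfterm j j h1 le_rfl h3 j' hj' h' hh', if_pos rfl]
    -- E1
    have E1 : ∀ j h, 1 ≤ h → h + 1 ≤ j → j ≤ n-1 → μ • π j h v = π j (h+1) v := by
      intro j h h1 h2 h3
      have e := congrArg (π j h) happ
      rw [map_add, map_smul] at e
      rw [hπxv j h h1 (by omega) h3, if_pos h2,
        hπfv_ne j h h1 (by omega) h3 (by omega), add_zero] at e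
      exact e.symm
    -- u and y
    set u : ∀ a : ℕ, V a :=
      fun a => ∑ j' ∈ Finset.Icc a (n-1), downTo Bb a j' (p j' (π j' a v)) with hu
    set y : ∀ a : ℕ, V a := fun a => ∑ h' ∈ Finset.Icc 1 a, upTo B h' a (u h') with hy
    -- E2
    have E2 : ∀ j, 1 ≤ j → j ≤ n-1 → μ • π j j v = q j (y j) := by
      intro j h1 h3
      have e := congrArg (π j j) happ
      rw [map_add, map_smul] at e
      rw [hπxv j j h1 le_rfl h3, if_neg (by omega),
        hπfv_eq j h1 h3, zero_add] at e
      rw [← e]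
      have s1 : ∀ j' ∈ Finset.Icc 1 (n-1),
          (∑ h' ∈ Finset.Icc 1 j', phiBlock B Bb p q h' j' j (π j' h' v))
            = ∑ h' ∈ Finset.Icc 1 (n-1), phiBlock B Bb p q h' j' j (π j' h' v) := by
        intro j' hj'
        rw [Finset.mem_Icc] at hj'
        apply Finset.sum_subset
        · intro t ht
          rw [Finset.mem_Icc] at ht ⊢
          omega
        · intro h' hmem hnot
          rw [Finset.mem_Icc] at hmem
          have hgt : ¬ h' ≤ j' := fun hh => hnot (Finset.mem_Icc.mpr ⟨hmem.1, hh⟩)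
          rw [phiBlock_zero_right B Bb p q hgt, LinearMap.zero_apply]
      rw [Finset.sum_congr rfl s1, Finset.sum_comm]
      have s2 : ∀ h' ∈ Finset.Icc 1 (n-1),
          (∑ j' ∈ Finset.Icc 1 (n-1), phiBlock B Bb p q h' j' j (π j' h' v))
            = if h' ≤ j then q j (upTo B h' j (u h')) else 0 := by
        intro h' hh'
        rw [Finset.mem_Icc] at hh'
        have s2a : (∑ j' ∈ Finset.Icc 1 (n-1), phiBlock B Bb p q h' j' j (π j' h' v))
            = ∑ j' ∈ Finset.Icc h' (n-1), phiBlock B Bb p q h' j' j (π j' h' v) := by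
          symm
          apply Finset.sum_subset
          · intro t ht
            rw [Finset.mem_Icc] at ht ⊢
            omega
          · intro j' hmem hnot
            rw [Finset.mem_Icc] at hmem
            have hgt : ¬ h' ≤ j' := fun hh => hnot (Finset.mem_Icc.mpr ⟨hh, hmem.2⟩)
            rw [phiBlock_zero_right B Bb p q hgt, LinearMap.zero_apply]
        rw [s2a]
        by_cases hc : h' ≤ j
        · rw [if_pos hc]
          have s2b : ∀ j' ∈ Finset.Icc h' (n-1),
              phiBlock B Bb p q h' j' j (π j' h' v)
                = q j (upTo B h' j (downTo Bb h' j' (p j' (π j' h' v)))) := by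
            intro j' hj'
            rw [Finset.mem_Icc] at hj'
            rw [phiBlock_eq B Bb p q hc hj'.1]
            rfl
          rw [Finset.sum_congr rfl s2b, ← map_sum, ← map_sum]
        · rw [if_neg hc]
          apply Finset.sum_eq_zero
          intro j' _
          rw [phiBlock_zero_left B Bb p q hc, LinearMap.zero_apply]
      rw [Finset.sum_congr rfl s2]
      have s3 : (∑ h' ∈ Finset.Icc 1 (n-1),
            if h' ≤ j then q j (upTo B h' j (u h')) else 0)
          = ∑ h' ∈ Finset.Icc 1 j, if h' ≤ j then q j (upTo B h' j (u h')) else 0 := by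
        symm
        apply Finset.sum_subset
        · intro t ht
          rw [Finset.mem_Icc] at ht ⊢
          omega
        · intro h' hmem hnot
          rw [Finset.mem_Icc] at hmem
          rw [if_neg (fun hh => hnot (Finset.mem_Icc.mpr ⟨hmem.1, hh⟩))]
      rw [s3, Finset.sum_congr rfl
        (fun h' hh' => if_pos (Finset.mem_Icc.mp hh').2), ← map_sum]
    -- recursions
    have R1 : ∀ a : ℕ, y (a+1) = u (a+1) + B a (y a) := by
      intro a
      simp only [hy]
      rw [show Finset.Icc 1 (a+1) = insert (a+1) (Finset.Icc 1 a) from by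
        ext t; simp only [Finset.mem_Icc, Finset.mem_insert]; omega]
      rw [Finset.sum_insert (by simp only [Finset.mem_Icc]; omega)]
      rw [upTo_self, LinearMap.id_apply]
      congr 1
      rw [map_sum]
      apply Finset.sum_congr rfl
      intro h' hh'
      rw [Finset.mem_Icc] at hh'
      rw [upTo_succ B hh'.2, LinearMap.comp_apply]
    have R2 : ∀ a, 1 ≤ a → a ≤ n-1 →
        μ • u a = μ • (p a (π a a v)) + Bb a (u (a+1)) := by
      intro a h1 h2
      simp only [hu]
      rw [show Finset.Icc a (n-1) = insert a (Finset.Icc (a+1) (n-1)) from by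
        ext t; simp only [Finset.mem_Icc, Finset.mem_insert]; omega]
      rw [Finset.sum_insert (by simp only [Finset.mem_Icc]; omega), smul_add]
      congr 1
      · rw [downTo_self, LinearMap.id_apply]
      · rw [Finset.smul_sum, map_sum]
        apply Finset.sum_congr rfl
        intro j' hj'
        rw [Finset.mem_Icc] at hj'
        rw [downTo_peel Bb (show a < j' by omega), LinearMap.comp_apply,
          ← map_smul, ← map_smul, ← map_smul, E1 j' a h1 (by omega) hj'.2]
    have R3 : ∀ i, i + 1 ≤ n-1 → ∀ z : V (i+1),
        p (i+1) (q (i+1) z) = Bb (i+1) (B (i+1) z) - B i (Bb i z) := by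
      intro i hi z
      have hz := LinearMap.ext_iff.mp (hmoment i hi) z
      simp only [LinearMap.add_apply, LinearMap.sub_apply, LinearMap.comp_apply,
        LinearMap.zero_apply] at hz
      rw [← sub_eq_zero,
        show p (i+1) (q (i+1) z) - (Bb (i+1) (B (i+1) z) - B i (Bb i z))
          = B i (Bb i z) - Bb (i+1) (B (i+1) z) + p (i+1) (q (i+1) z) from by abel,
        hz]
    have hBb0 : Bb 0 = 0 := hBb 0 (by omega)
    have Q : ∀ a, a ≤ n-1 → μ • y a = Bb a (y (a+1)) := by
      intro a
      induction a with
      | zero =>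
        intro _
        have hy0 : y 0 = 0 := by
          simp only [hy]
          rw [Finset.Icc_eq_empty (by omega), Finset.sum_empty]
        rw [hy0, smul_zero, hBb0, LinearMap.zero_apply]
      | succ a ih =>
        intro hle
        have ihv := ih (by omega)
        calc μ • y (a+1) = μ • u (a+1) + B a (μ • y a) := by
              rw [R1 a, smul_add, map_smul]
          _ = (μ • p (a+1) (π (a+1) (a+1) v) + Bb (a+1) (u (a+1+1)))
                + B a (Bb a (y (a+1))) := by
              rw [R2 (a+1) (by omega) hle, ihv]
          _ = (p (a+1) (q (a+1) (y (a+1))) + Bb (a+1) (u (a+1+1)))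
                + B a (Bb a (y (a+1))) := by
              rw [← map_smul, E2 (a+1) (by omega) hle]
          _ = ((Bb (a+1) (B (a+1) (y (a+1))) - B a (Bb a (y (a+1))))
                + Bb (a+1) (u (a+1+1))) + B a (Bb a (y (a+1))) := by
              rw [R3 a hle (y (a+1))]
          _ = Bb (a+1) (u (a+1+1) + B (a+1) (y (a+1))) := by
              rw [map_add]; abel
          _ = Bb (a+1) (y (a+1+1)) := by rw [← R1 (a+1)]
    have hyn : ∀ k, y (n - k) = 0 := by
      intro k
      induction k with
      | zero =>
        rw [Nat.sub_zero]
        exact Subsingleton.elim _ _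
      | succ k ih =>
        by_cases h0 : n - (k+1) = 0
        · rw [h0]
          simp only [hy]
          rw [Finset.Icc_eq_empty (by omega), Finset.sum_empty]
        · have hQ := Q (n - (k+1)) (by omega)
          have h3 : y (n - (k+1) + 1) = 0 := by
            rw [show n - (k+1) + 1 = n - k from by omega]
            exact ih
          rw [h3, map_zero] at hQ
          exact (smul_eq_zero.mp hQ).resolve_left hμ
    have hyall : ∀ a, a ≤ n → y a = 0 := by
      intro a ha
      have := hyn (n - a)
      rw [show n - (n - a) = a from by omega] at this
      exact this
    have hvjj : ∀ j, 1 ≤ j → j ≤ n-1 → π j j v = 0 := by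
      intro j h1 h2
      have hE := E2 j h1 h2
      rw [hyall j (by omega), map_zero] at hE
      exact (smul_eq_zero.mp hE).resolve_left hμ
    have hvall : ∀ k j h, 1 ≤ h → h + k = j → j ≤ n-1 → π j h v = 0 := by
      intro k
      induction k with
      | zero =>
        intro j h h1 h2 h3
        obtain rfl : h = j := by omega
        exact hvjj h h1 h3
      | succ k ih =>
        intro j h h1 h2 h3
        have hE := E1 j h h1 (by omega) h3
        rw [ih j (h+1) (by omega) (by omega) h3] at hE
        exact (smul_eq_zero.mp hE).resolve_left hμ
    rw [hsum]
    apply Finset.sum_eq_zero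
    intro j hj
    apply Finset.sum_eq_zero
    intro h hh
    rw [Finset.mem_Icc] at hj hh
    rw [hvall (j - h) j h hh.1 (by omega) hj.2, map_zero]
  -- conclude nilpotency via the minimal polynomial
  have hev : ∀ μ : ℂ, Module.End.HasEigenvalue (x + f) μ → μ = 0 := by
    intro μ hμev
    by_contra hμ
    obtain ⟨w, hw⟩ := hμev.exists_hasEigenvector
    exact hw.2 (key μ hμ w (Module.End.mem_eigenspace_iff.mp hw.1))
  have hint : IsIntegral ℂ (x + f) := Algebra.IsIntegral.isIntegral _
  set P := minpoly ℂ (x + f) with hP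
  have hmon : P.Monic := minpoly.monic hint
  have hPr : P = (P.roots.map fun a => Polynomial.X - Polynomial.C a).prod :=
    (IsAlgClosed.splits P).eq_prod_roots_of_monic hmon
  have hrep : P.roots.map (fun a => Polynomial.X - Polynomial.C a)
      = Multiset.replicate (Multiset.card P.roots) Polynomial.X := by
    rw [Multiset.eq_replicate]
    constructor
    · rw [Multiset.card_map]
    · intro b hb
      obtain ⟨a, ha, rfl⟩ := Multiset.mem_map.mp hb
      have ha0 : a = 0 := by
        apply hev
        apply Module.End.hasEigenvalue_of_isRoot
        rw [← hP]
        exact Polynomial.isRoot_of_mem_roots ha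
      rw [ha0, map_zero, sub_zero]
  have hPX : P = Polynomial.X ^ Multiset.card P.roots := by
    conv_lhs => rw [hPr, hrep, Multiset.prod_replicate]
  refine ⟨Multiset.card P.roots, ?_⟩
  have h0 := minpoly.aeval ℂ (x + f)
  rw [← hP, hPX, map_pow, Polynomial.aeval_X] at h0
  exact h0
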